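/- Under the same hypotheses, for every t > 0, ∫_M |U_t^+(v)(γ)(k)|²/min(1, t·ω(k)) dμ(k) ≤ ‖v/ω‖²_{L²}. -/

import Mathlib

open MeasureTheory Real

lemma key_pointwise (c t : ℝ) (hc : 0 < c) (ht : 0 < t) (γ : ℝ → ℝ)
    (hγ : ∀ s, |γ s| ≤ 1) :
    (∫ s in (0:ℝ)..t, Real.exp (-s * c) * γ s) ^ 2 ≤ min 1 (t * c) / c ^ 2 := by
  set I := ∫ s in (0:ℝ)..t, Real.exp (-s * c) * γ s with hI
  set A := ∫ s in (0:ℝ)..t, Real.exp (-s * c) with hA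
  have hexpint : IntervalIntegrable (fun s => Real.exp (-s * c)) volume 0 t :=
    (Continuous.intervalIntegrable (by continuity) 0 t)
  have hIA : |I| ≤ A := by
    have h := intervalIntegral.norm_integral_le_abs_of_norm_le
      (f := fun s => Real.exp (-s * c) * γ s) (g := fun s => Real.exp (-s * c))
      (a := (0:ℝ)) (b := t) (μ := volume)
      (Filter.Eventually.of_forall fun s => by
        rw [Real.norm_eq_abs, abs_mul, abs_of_pos (Real.exp_pos _)]
        calc Real.exp (-s * c) * |γ s| ≤ Real.exp (-s * c) * 1 := by
              exact mul_le_mul_of_nonneg_left (hγ s) (Real.exp_pos _).le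
          _ = Real.exp (-s * c) := mul_one _) hexpint
    have hA0' : 0 ≤ ∫ s in (0:ℝ)..t, Real.exp (-s * c) :=
      intervalIntegral.integral_nonneg ht.le (fun s _ => (Real.exp_pos _).le)
    rwa [Real.norm_eq_abs, abs_of_nonneg hA0'] at h
  -- exact value of A
  have hAval : A = (1 - Real.exp (-t * c)) / c := by
    have hderiv : ∀ s ∈ Set.uIcc (0:ℝ) t,
        HasDerivAt (fun s => -Real.exp (-s * c) / c) (Real.exp (-s * c)) s := by
      intro s _
      have h1 : HasDerivAt (fun s : ℝ => -s * c) (-c) s := by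
        simpa using ((hasDerivAt_id s).neg.mul_const c)
      have h2 := (h1.exp).neg.div_const c
      refine h2.congr_deriv ?_
      rw [mul_neg, neg_neg, mul_div_assoc, div_self hc.ne', mul_one]
    have := intervalIntegral.integral_eq_sub_of_hasDerivAt hderiv hexpint
    rw [hA, this]
    simp [neg_div, sub_eq_add_neg, neg_mul]
    ring
  have hA1 : A ≤ 1 / c := by
    rw [hAval]
    gcongr
    have := (Real.exp_pos (-t * c)).le
    linarith
  have hA2 : A ≤ t := by
    calc A ≤ ∫ s in (0:ℝ)..t, (1:ℝ) := by
          apply intervalIntegral.integral_mono_on ht.le hexpint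
            (intervalIntegrable_const)
          intro s hs
          rw [← Real.exp_zero]
          apply Real.exp_le_exp.2
          have : 0 ≤ s := hs.1
          nlinarith
      _ = t := by simp
  have hA0 : 0 ≤ A := le_trans (abs_nonneg I) hIA
  have hsq : I ^ 2 ≤ A ^ 2 := by
    rw [← sq_abs I]
    exact pow_le_pow_left₀ (abs_nonneg I) hIA 2
  have hmin : A ^ 2 ≤ min 1 (t * c) / c ^ 2 := by
    rw [← min_div_div_right (by positivity : (0:ℝ) ≤ c ^ 2) 1 (t * c)]
    refine le_min ?_ ?_
    · calc A ^ 2 ≤ (1 / c) ^ 2 := pow_le_pow_left₀ hA0 hA1 2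
        _ = 1 / c ^ 2 := by rw [div_pow, one_pow]
    · calc A ^ 2 = A * A := sq A
        _ ≤ t * (1 / c) := mul_le_mul hA2 hA1 hA0 ht.le
        _ = t * c / c ^ 2 := by field_simp
  exact hsq.trans hmin

/-- The weighted bound
`∫_M |U_t^+(v)(γ)(k)|² / min(1, t·ω(k)) dμ(k) ≤ ‖v/ω‖²_{L²}`. -/
theorem Uplus_weighted_bound
    {M : Type*} [MeasurableSpace M] (μ : Measure M) [SigmaFinite μ]
    (ω : M → ℝ) (hωm : Measurable ω) (hωpos : ∀ k, 0 < ω k)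
    (v : M → ℂ) (hvm : Measurable v)
    (hvω : MemLp (fun k => v k / (ω k : ℂ)) 2 μ)
    (γ : ℝ → ℝ) (hγval : ∀ s, γ s = 1 ∨ γ s = -1)
    (hγrc : ∀ s, ContinuousWithinAt γ (Set.Ici s) s)
    (t : ℝ) (ht : 0 < t) :
    ∫⁻ k, ENNReal.ofReal
        (‖(∫ s in (0:ℝ)..t, Real.exp (-s * ω k) * γ s) • v k‖ ^ 2
          / min 1 (t * ω k)) ∂μ
      ≤ ∫⁻ k, ENNReal.ofReal (‖v k / (ω k : ℂ)‖ ^ 2) ∂μ := by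
  apply lintegral_mono
  intro k
  apply ENNReal.ofReal_le_ofReal
  have hc := hωpos k
  have hγb : ∀ s, |γ s| ≤ 1 := fun s => by rcases hγval s with h | h <;> simp [h]
  have hminpos : 0 < min 1 (t * ω k) := lt_min one_pos (by positivity)
  have hnorm : ‖v k / (ω k : ℂ)‖ ^ 2 = ‖v k‖ ^ 2 / (ω k) ^ 2 := by
    rw [norm_div, div_pow]
    congr 1
    rw [Complex.norm_real, Real.norm_eq_abs, abs_of_pos hc]
  rw [div_le_iff₀ hminpos, hnorm, norm_smul, mul_pow, Real.norm_eq_abs, sq_abs]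
  calc (∫ s in (0:ℝ)..t, Real.exp (-s * ω k) * γ s) ^ 2 * ‖v k‖ ^ 2
      ≤ (min 1 (t * ω k) / (ω k) ^ 2) * ‖v k‖ ^ 2 := by
        apply mul_le_mul_of_nonneg_right (key_pointwise (ω k) t hc ht γ hγb)
        positivity
    _ = ‖v k‖ ^ 2 / (ω k) ^ 2 * min 1 (t * ω k) := by ring
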